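/- Let G be a uniquely C4+-saturated graph with at least one triangle and let A be the set of all vertices belonging to some triangle of G. If there exists a vertex at distance 2 from A, then all vertices of G not in A have the same degree in G. -/

import Mathlib

open SimpleGraph

/-- The diamond graph `C₄⁺`: a `4`-cycle with one chord, i.e. `K₄` minus an edge. -/
def diamond : SimpleGraph (Fin 4) := (⊤ : SimpleGraph (Fin 4)).deleteEdges {s(0, 1)}

/-- `G'` is a copy of `H` in `G`, i.e. a subgraph of `G` isomorphic to `H`. -/
def IsCopy {W V : Type*} (H : SimpleGraph W) {G : SimpleGraph V} (G' : G.Subgraph) : Prop :=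
  Nonempty (G'.coe ≃g H)

/-- `G` is uniquely `H`-saturated: `G` is `H`-free, and adding any non-edge
creates exactly one copy of `H`. -/
def UniquelySaturated {W V : Type*} (H : SimpleGraph W) (G : SimpleGraph V) : Prop :=
  (∀ G' : G.Subgraph, ¬ IsCopy H G') ∧
    ∀ u v : V, u ≠ v → ¬ G.Adj u v →
      ∃! G' : (G ⊔ SimpleGraph.fromEdgeSet {s(u, v)}).Subgraph, IsCopy H G'

/-- The set of vertices belonging to some triangle of `G`. -/
def triangleVerts {V : Type*} (G : SimpleGraph V) : Set V :=
  {v | ∃ a b, G.Adj v a ∧ G.Adj v b ∧ G.Adj a b}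

section Aux

variable {V : Type*}


lemma diamond_adj (i j : Fin 4) :
    diamond.Adj i j ↔ i ≠ j ∧ ¬((i = 0 ∧ j = 1) ∨ (i = 1 ∧ j = 0)) := by
  simp [diamond, Sym2.eq_iff]

def dAt (H : SimpleGraph V) (u v w z : V) : H.Subgraph where
  verts := {u, v, w, z}
  Adj a b := H.Adj a b ∧ s(a, b) ∈ ({s(u,v), s(u,w), s(u,z), s(v,w), s(v,z)} : Set (Sym2 V))
  adj_sub h := h.1
  edge_vert {a b} h := by
    have h2 := h.2
    simp only [Set.mem_insert_iff, Set.mem_singleton_iff, Sym2.eq_iff] at h2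
    simp only [Set.mem_insert_iff, Set.mem_singleton_iff]
    tauto
  symm := ⟨fun a b h => ⟨h.1.symm, by rw [Sym2.eq_swap (a := b) (b := a)]; exact h.2⟩⟩

@[simp] lemma dAt_verts (H : SimpleGraph V) (u v w z : V) :
    (dAt H u v w z).verts = {u, v, w, z} := rfl

lemma dAt_adj (H : SimpleGraph V) (u v w z a b : V) :
    (dAt H u v w z).Adj a b ↔ H.Adj a b ∧
      s(a, b) ∈ ({s(u,v), s(u,w), s(u,z), s(v,w), s(v,z)} : Set (Sym2 V)) := Iff.rfl

lemma isCopy_dAt {H : SimpleGraph V} {u v w z : V}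
    (huv : H.Adj u v) (huw : H.Adj u w) (huz : H.Adj u z)
    (hvw : H.Adj v w) (hvz : H.Adj v z) (hwz : w ≠ z) :
    IsCopy diamond (dAt H u v w z) := by
  classical
  have h1 : u ≠ v := huv.ne
  have h2 : u ≠ w := huw.ne
  have h3 : u ≠ z := huz.ne
  have h4 : v ≠ w := hvw.ne
  have h5 : v ≠ z := hvz.ne
  let f : Fin 4 → ↥(dAt H u v w z).verts :=
    ![⟨w, by simp⟩, ⟨z, by simp⟩, ⟨u, by simp⟩, ⟨v, by simp⟩]
  let g : ↥(dAt H u v w z).verts → Fin 4 :=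
    fun x => if x.1 = u then 2 else if x.1 = v then 3 else if x.1 = w then 0 else 1
  have hgf : Function.LeftInverse g f := by
    intro i
    fin_cases i <;>
      simp [f, g, h1.symm, h2.symm, h3.symm, h4.symm, h5.symm, hwz, hwz.symm, h1, h2, h3, h4, h5]
  have hfg : Function.RightInverse g f := by
    rintro ⟨x, hx⟩
    simp only [dAt_verts, Set.mem_insert_iff, Set.mem_singleton_iff] at hx
    rcases hx with rfl | rfl | rfl | rfl <;>
      simp [f, g, h1, h2.symm, h3.symm, h4.symm, h5.symm, hwz, hwz.symm, h1.symm, h4, h5]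
  let e : Fin 4 ≃ ↥(dAt H u v w z).verts := ⟨f, g, hgf, hfg⟩
  have hmap : ∀ i j : Fin 4, (dAt H u v w z).coe.Adj (e i) (e j) ↔ diamond.Adj i j := by
    intro i j
    change (dAt H u v w z).coe.Adj (f i) (f j) ↔ diamond.Adj i j
    rw [Subgraph.coe_adj]
    fin_cases i <;> fin_cases j <;>
      simp [e, f, diamond_adj, Subgraph.coe_adj, dAt_adj, Sym2.eq_iff,
        h1, h2, h3, h4, h5, hwz, h1.symm, h2.symm, h3.symm, h4.symm, h5.symm, hwz.symm,
        huv, huw, huz, hvw, hvz, huv.symm, huw.symm, huz.symm, hvw.symm, hvz.symm]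
  exact ⟨(RelIso.mk e (fun {i j} => hmap i j)).symm⟩


lemma extract {H : SimpleGraph V} {G' : H.Subgraph} (h : IsCopy diamond G') :
    ∃ a : Fin 4 → V, Function.Injective a ∧
      ∀ i j, G'.Adj (a i) (a j) ↔ diamond.Adj i j := by
  obtain ⟨e⟩ := h
  refine ⟨fun i => (e.symm i : V), ?_, ?_⟩
  · intro i j hij
    exact e.symm.toEquiv.injective (Subtype.ext hij)
  · intro i j
    rw [← Subgraph.coe_adj]
    exact e.symm.map_rel_iff

lemma chord_pair {G : SimpleGraph V}
    (hfree : ∀ G'' : G.Subgraph, ¬ IsCopy diamond G'')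
    {u v : V} (hne : u ≠ v)
    {G' : (G ⊔ fromEdgeSet {s(u, v)}).Subgraph} (hcopy : IsCopy diamond G')
    (hu : u ∉ triangleVerts G)
    (hexcl : v ∉ triangleVerts G ∨ ∀ a ∈ triangleVerts G, ¬ G.Adj u a) :
    ∃ w z, w ≠ z ∧ G.Adj u w ∧ G.Adj u z ∧ G.Adj v w ∧ G.Adj v z := by
  obtain ⟨a, inj, hiff⟩ := extract hcopy
  have hsym2 : ∀ i j k l : Fin 4,
      s(a i, a j) = s(a k, a l) ↔ ((i = k ∧ j = l) ∨ (i = l ∧ j = k)) := by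
    intro i j k l
    rw [Sym2.eq_iff]
    simp [inj.eq_iff]
  have hGadj : ∀ i j : Fin 4, diamond.Adj i j → s(a i, a j) ≠ s(u, v) → G.Adj (a i) (a j) := by
    intro i j hd hne'
    have h := ((hiff i j).mpr hd).adj_sub
    rw [sup_adj, fromEdgeSet_adj] at h
    rcases h with h | ⟨h, _⟩
    · exact h
    · exact absurd (Set.mem_singleton_iff.mp h) hne'
  have key : ∃ i j : Fin 4, diamond.Adj i j ∧ s(a i, a j) = s(u, v) := by
    by_contra hk
    push_neg at hk
    have hadjG : ∀ i j : Fin 4, diamond.Adj i j → G.Adj (a i) (a j) :=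
      fun i j hd => hGadj i j hd (hk i j hd)
    exact hfree (dAt G (a 2) (a 3) (a 0) (a 1))
      (isCopy_dAt (hadjG 2 3 ((diamond_adj 2 3).mpr (by decide)))
        (hadjG 2 0 ((diamond_adj 2 0).mpr (by decide)))
        (hadjG 2 1 ((diamond_adj 2 1).mpr (by decide)))
        (hadjG 3 0 ((diamond_adj 3 0).mpr (by decide)))
        (hadjG 3 1 ((diamond_adj 3 1).mpr (by decide)))
        (fun h => absurd (inj h) (by decide)))
  obtain ⟨i, j, hd, hpair⟩ := key
  rw [Sym2.eq_iff] at hpair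
  fin_cases i <;> fin_cases j
  · rw [diamond_adj] at hd
    exact absurd hd (by decide)
  · rw [diamond_adj] at hd
    exact absurd hd (by decide)
  · obtain ⟨hA, hB⟩ | ⟨hA, hB⟩ := hpair
    · subst hA; subst hB
      rcases hexcl with hv | hA2
      · exact absurd (hv ⟨a 1, a 3, (hGadj 2 1 ((diamond_adj 2 1).mpr (by decide)) (by rw [Ne, hsym2]; decide)), (hGadj 2 3 ((diamond_adj 2 3).mpr (by decide)) (by rw [Ne, hsym2]; decide)), (hGadj 1 3 ((diamond_adj 1 3).mpr (by decide)) (by rw [Ne, hsym2]; decide))⟩) not_false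
      · exact hA2 (a 3) ⟨a 2, a 1, (hGadj 2 3 ((diamond_adj 2 3).mpr (by decide)) (by rw [Ne, hsym2]; decide)).symm, (hGadj 1 3 ((diamond_adj 1 3).mpr (by decide)) (by rw [Ne, hsym2]; decide)).symm, (hGadj 2 1 ((diamond_adj 2 1).mpr (by decide)) (by rw [Ne, hsym2]; decide))⟩ (hGadj 0 3 ((diamond_adj 0 3).mpr (by decide)) (by rw [Ne, hsym2]; decide)) |>.elim
    · subst hA; subst hB
      exact absurd (hu ⟨a 1, a 3, (hGadj 2 1 ((diamond_adj 2 1).mpr (by decide)) (by rw [Ne, hsym2]; decide)), (hGadj 2 3 ((diamond_adj 2 3).mpr (by decide)) (by rw [Ne, hsym2]; decide)), (hGadj 1 3 ((diamond_adj 1 3).mpr (by decide)) (by rw [Ne, hsym2]; decide))⟩) not_false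
  · obtain ⟨hA, hB⟩ | ⟨hA, hB⟩ := hpair
    · subst hA; subst hB
      rcases hexcl with hv | hA2
      · exact absurd (hv ⟨a 1, a 2, (hGadj 3 1 ((diamond_adj 3 1).mpr (by decide)) (by rw [Ne, hsym2]; decide)), (hGadj 3 2 ((diamond_adj 3 2).mpr (by decide)) (by rw [Ne, hsym2]; decide)), (hGadj 1 2 ((diamond_adj 1 2).mpr (by decide)) (by rw [Ne, hsym2]; decide))⟩) not_false
      · exact hA2 (a 2) ⟨a 3, a 1, (hGadj 3 2 ((diamond_adj 3 2).mpr (by decide)) (by rw [Ne, hsym2]; decide)).symm, (hGadj 1 2 ((diamond_adj 1 2).mpr (by decide)) (by rw [Ne, hsym2]; decide)).symm, (hGadj 3 1 ((diamond_adj 3 1).mpr (by decide)) (by rw [Ne, hsym2]; decide))⟩ (hGadj 0 2 ((diamond_adj 0 2).mpr (by decide)) (by rw [Ne, hsym2]; decide)) |>.elim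
    · subst hA; subst hB
      exact absurd (hu ⟨a 1, a 2, (hGadj 3 1 ((diamond_adj 3 1).mpr (by decide)) (by rw [Ne, hsym2]; decide)), (hGadj 3 2 ((diamond_adj 3 2).mpr (by decide)) (by rw [Ne, hsym2]; decide)), (hGadj 1 2 ((diamond_adj 1 2).mpr (by decide)) (by rw [Ne, hsym2]; decide))⟩) not_false
  · rw [diamond_adj] at hd
    exact absurd hd (by decide)
  · rw [diamond_adj] at hd
    exact absurd hd (by decide)
  · obtain ⟨hA, hB⟩ | ⟨hA, hB⟩ := hpair
    · subst hA; subst hB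
      rcases hexcl with hv | hA2
      · exact absurd (hv ⟨a 0, a 3, (hGadj 2 0 ((diamond_adj 2 0).mpr (by decide)) (by rw [Ne, hsym2]; decide)), (hGadj 2 3 ((diamond_adj 2 3).mpr (by decide)) (by rw [Ne, hsym2]; decide)), (hGadj 0 3 ((diamond_adj 0 3).mpr (by decide)) (by rw [Ne, hsym2]; decide))⟩) not_false
      · exact hA2 (a 3) ⟨a 2, a 0, (hGadj 2 3 ((diamond_adj 2 3).mpr (by decide)) (by rw [Ne, hsym2]; decide)).symm, (hGadj 0 3 ((diamond_adj 0 3).mpr (by decide)) (by rw [Ne, hsym2]; decide)).symm, (hGadj 2 0 ((diamond_adj 2 0).mpr (by decide)) (by rw [Ne, hsym2]; decide))⟩ (hGadj 1 3 ((diamond_adj 1 3).mpr (by decide)) (by rw [Ne, hsym2]; decide)) |>.elim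
    · subst hA; subst hB
      exact absurd (hu ⟨a 0, a 3, (hGadj 2 0 ((diamond_adj 2 0).mpr (by decide)) (by rw [Ne, hsym2]; decide)), (hGadj 2 3 ((diamond_adj 2 3).mpr (by decide)) (by rw [Ne, hsym2]; decide)), (hGadj 0 3 ((diamond_adj 0 3).mpr (by decide)) (by rw [Ne, hsym2]; decide))⟩) not_false
  · obtain ⟨hA, hB⟩ | ⟨hA, hB⟩ := hpair
    · subst hA; subst hB
      rcases hexcl with hv | hA2
      · exact absurd (hv ⟨a 0, a 2, (hGadj 3 0 ((diamond_adj 3 0).mpr (by decide)) (by rw [Ne, hsym2]; decide)), (hGadj 3 2 ((diamond_adj 3 2).mpr (by decide)) (by rw [Ne, hsym2]; decide)), (hGadj 0 2 ((diamond_adj 0 2).mpr (by decide)) (by rw [Ne, hsym2]; decide))⟩) not_false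
      · exact hA2 (a 2) ⟨a 3, a 0, (hGadj 3 2 ((diamond_adj 3 2).mpr (by decide)) (by rw [Ne, hsym2]; decide)).symm, (hGadj 0 2 ((diamond_adj 0 2).mpr (by decide)) (by rw [Ne, hsym2]; decide)).symm, (hGadj 3 0 ((diamond_adj 3 0).mpr (by decide)) (by rw [Ne, hsym2]; decide))⟩ (hGadj 1 2 ((diamond_adj 1 2).mpr (by decide)) (by rw [Ne, hsym2]; decide)) |>.elim
    · subst hA; subst hB
      exact absurd (hu ⟨a 0, a 2, (hGadj 3 0 ((diamond_adj 3 0).mpr (by decide)) (by rw [Ne, hsym2]; decide)), (hGadj 3 2 ((diamond_adj 3 2).mpr (by decide)) (by rw [Ne, hsym2]; decide)), (hGadj 0 2 ((diamond_adj 0 2).mpr (by decide)) (by rw [Ne, hsym2]; decide))⟩) not_false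
  · obtain ⟨hA, hB⟩ | ⟨hA, hB⟩ := hpair
    · subst hA; subst hB
      exact absurd (hu ⟨a 1, a 3, (hGadj 2 1 ((diamond_adj 2 1).mpr (by decide)) (by rw [Ne, hsym2]; decide)), (hGadj 2 3 ((diamond_adj 2 3).mpr (by decide)) (by rw [Ne, hsym2]; decide)), (hGadj 1 3 ((diamond_adj 1 3).mpr (by decide)) (by rw [Ne, hsym2]; decide))⟩) not_false
    · subst hA; subst hB
      rcases hexcl with hv | hA2
      · exact absurd (hv ⟨a 1, a 3, (hGadj 2 1 ((diamond_adj 2 1).mpr (by decide)) (by rw [Ne, hsym2]; decide)), (hGadj 2 3 ((diamond_adj 2 3).mpr (by decide)) (by rw [Ne, hsym2]; decide)), (hGadj 1 3 ((diamond_adj 1 3).mpr (by decide)) (by rw [Ne, hsym2]; decide))⟩) not_false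
      · exact hA2 (a 3) ⟨a 2, a 1, (hGadj 2 3 ((diamond_adj 2 3).mpr (by decide)) (by rw [Ne, hsym2]; decide)).symm, (hGadj 1 3 ((diamond_adj 1 3).mpr (by decide)) (by rw [Ne, hsym2]; decide)).symm, (hGadj 2 1 ((diamond_adj 2 1).mpr (by decide)) (by rw [Ne, hsym2]; decide))⟩ (hGadj 0 3 ((diamond_adj 0 3).mpr (by decide)) (by rw [Ne, hsym2]; decide)) |>.elim
  · obtain ⟨hA, hB⟩ | ⟨hA, hB⟩ := hpair
    · subst hA; subst hB
      exact absurd (hu ⟨a 0, a 3, (hGadj 2 0 ((diamond_adj 2 0).mpr (by decide)) (by rw [Ne, hsym2]; decide)), (hGadj 2 3 ((diamond_adj 2 3).mpr (by decide)) (by rw [Ne, hsym2]; decide)), (hGadj 0 3 ((diamond_adj 0 3).mpr (by decide)) (by rw [Ne, hsym2]; decide))⟩) not_false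
    · subst hA; subst hB
      rcases hexcl with hv | hA2
      · exact absurd (hv ⟨a 0, a 3, (hGadj 2 0 ((diamond_adj 2 0).mpr (by decide)) (by rw [Ne, hsym2]; decide)), (hGadj 2 3 ((diamond_adj 2 3).mpr (by decide)) (by rw [Ne, hsym2]; decide)), (hGadj 0 3 ((diamond_adj 0 3).mpr (by decide)) (by rw [Ne, hsym2]; decide))⟩) not_false
      · exact hA2 (a 3) ⟨a 2, a 0, (hGadj 2 3 ((diamond_adj 2 3).mpr (by decide)) (by rw [Ne, hsym2]; decide)).symm, (hGadj 0 3 ((diamond_adj 0 3).mpr (by decide)) (by rw [Ne, hsym2]; decide)).symm, (hGadj 2 0 ((diamond_adj 2 0).mpr (by decide)) (by rw [Ne, hsym2]; decide))⟩ (hGadj 1 3 ((diamond_adj 1 3).mpr (by decide)) (by rw [Ne, hsym2]; decide)) |>.elim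
  · rw [diamond_adj] at hd
    exact absurd hd (by decide)
  · obtain ⟨hA, hB⟩ | ⟨hA, hB⟩ := hpair
    · subst hA; subst hB
      exact ⟨a 0, a 1, fun h => absurd (inj h) (by decide), (hGadj 2 0 ((diamond_adj 2 0).mpr (by decide)) (by rw [Ne, hsym2]; decide)), (hGadj 2 1 ((diamond_adj 2 1).mpr (by decide)) (by rw [Ne, hsym2]; decide)), (hGadj 3 0 ((diamond_adj 3 0).mpr (by decide)) (by rw [Ne, hsym2]; decide)), (hGadj 3 1 ((diamond_adj 3 1).mpr (by decide)) (by rw [Ne, hsym2]; decide))⟩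
    · subst hA; subst hB
      exact ⟨a 0, a 1, fun h => absurd (inj h) (by decide), (hGadj 3 0 ((diamond_adj 3 0).mpr (by decide)) (by rw [Ne, hsym2]; decide)), (hGadj 3 1 ((diamond_adj 3 1).mpr (by decide)) (by rw [Ne, hsym2]; decide)), (hGadj 2 0 ((diamond_adj 2 0).mpr (by decide)) (by rw [Ne, hsym2]; decide)), (hGadj 2 1 ((diamond_adj 2 1).mpr (by decide)) (by rw [Ne, hsym2]; decide))⟩
  · obtain ⟨hA, hB⟩ | ⟨hA, hB⟩ := hpair
    · subst hA; subst hB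
      exact absurd (hu ⟨a 1, a 2, (hGadj 3 1 ((diamond_adj 3 1).mpr (by decide)) (by rw [Ne, hsym2]; decide)), (hGadj 3 2 ((diamond_adj 3 2).mpr (by decide)) (by rw [Ne, hsym2]; decide)), (hGadj 1 2 ((diamond_adj 1 2).mpr (by decide)) (by rw [Ne, hsym2]; decide))⟩) not_false
    · subst hA; subst hB
      rcases hexcl with hv | hA2
      · exact absurd (hv ⟨a 1, a 2, (hGadj 3 1 ((diamond_adj 3 1).mpr (by decide)) (by rw [Ne, hsym2]; decide)), (hGadj 3 2 ((diamond_adj 3 2).mpr (by decide)) (by rw [Ne, hsym2]; decide)), (hGadj 1 2 ((diamond_adj 1 2).mpr (by decide)) (by rw [Ne, hsym2]; decide))⟩) not_false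
      · exact hA2 (a 2) ⟨a 3, a 1, (hGadj 3 2 ((diamond_adj 3 2).mpr (by decide)) (by rw [Ne, hsym2]; decide)).symm, (hGadj 1 2 ((diamond_adj 1 2).mpr (by decide)) (by rw [Ne, hsym2]; decide)).symm, (hGadj 3 1 ((diamond_adj 3 1).mpr (by decide)) (by rw [Ne, hsym2]; decide))⟩ (hGadj 0 2 ((diamond_adj 0 2).mpr (by decide)) (by rw [Ne, hsym2]; decide)) |>.elim
  · obtain ⟨hA, hB⟩ | ⟨hA, hB⟩ := hpair
    · subst hA; subst hB
      exact absurd (hu ⟨a 0, a 2, (hGadj 3 0 ((diamond_adj 3 0).mpr (by decide)) (by rw [Ne, hsym2]; decide)), (hGadj 3 2 ((diamond_adj 3 2).mpr (by decide)) (by rw [Ne, hsym2]; decide)), (hGadj 0 2 ((diamond_adj 0 2).mpr (by decide)) (by rw [Ne, hsym2]; decide))⟩) not_false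
    · subst hA; subst hB
      rcases hexcl with hv | hA2
      · exact absurd (hv ⟨a 0, a 2, (hGadj 3 0 ((diamond_adj 3 0).mpr (by decide)) (by rw [Ne, hsym2]; decide)), (hGadj 3 2 ((diamond_adj 3 2).mpr (by decide)) (by rw [Ne, hsym2]; decide)), (hGadj 0 2 ((diamond_adj 0 2).mpr (by decide)) (by rw [Ne, hsym2]; decide))⟩) not_false
      · exact hA2 (a 2) ⟨a 3, a 0, (hGadj 3 2 ((diamond_adj 3 2).mpr (by decide)) (by rw [Ne, hsym2]; decide)).symm, (hGadj 0 2 ((diamond_adj 0 2).mpr (by decide)) (by rw [Ne, hsym2]; decide)).symm, (hGadj 3 0 ((diamond_adj 3 0).mpr (by decide)) (by rw [Ne, hsym2]; decide))⟩ (hGadj 1 2 ((diamond_adj 1 2).mpr (by decide)) (by rw [Ne, hsym2]; decide)) |>.elim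
  · obtain ⟨hA, hB⟩ | ⟨hA, hB⟩ := hpair
    · subst hA; subst hB
      exact ⟨a 0, a 1, fun h => absurd (inj h) (by decide), (hGadj 3 0 ((diamond_adj 3 0).mpr (by decide)) (by rw [Ne, hsym2]; decide)), (hGadj 3 1 ((diamond_adj 3 1).mpr (by decide)) (by rw [Ne, hsym2]; decide)), (hGadj 2 0 ((diamond_adj 2 0).mpr (by decide)) (by rw [Ne, hsym2]; decide)), (hGadj 2 1 ((diamond_adj 2 1).mpr (by decide)) (by rw [Ne, hsym2]; decide))⟩
    · subst hA; subst hB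
      exact ⟨a 0, a 1, fun h => absurd (inj h) (by decide), (hGadj 2 0 ((diamond_adj 2 0).mpr (by decide)) (by rw [Ne, hsym2]; decide)), (hGadj 2 1 ((diamond_adj 2 1).mpr (by decide)) (by rw [Ne, hsym2]; decide)), (hGadj 3 0 ((diamond_adj 3 0).mpr (by decide)) (by rw [Ne, hsym2]; decide)), (hGadj 3 1 ((diamond_adj 3 1).mpr (by decide)) (by rw [Ne, hsym2]; decide))⟩
  · rw [diamond_adj] at hd
    exact absurd hd (by decide)

variable {G : SimpleGraph V}


lemma common_eq_pair [Fintype V] [DecidableEq V] [DecidableRel G.Adj]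
    (hsat : UniquelySaturated diamond G)
    {u v : V} (hu : u ∉ triangleVerts G)
    (hexcl : v ∉ triangleVerts G ∨ ∀ a ∈ triangleVerts G, ¬ G.Adj u a)
    (hne : u ≠ v) (hnadj : ¬ G.Adj u v) :
    ∃ w z : V, w ≠ z ∧ G.neighborFinset u ∩ G.neighborFinset v = {w, z} := by
  obtain ⟨G', hG', huniq⟩ := hsat.2 u v hne hnadj
  obtain ⟨w, z, hwz, huw, huz, hvw, hvz⟩ := chord_pair hsat.1 hne hG' hu hexcl
  refine ⟨w, z, hwz, ?_⟩
  have hGp : ∀ {x y : V}, G.Adj x y → (G ⊔ fromEdgeSet {s(u,v)}).Adj x y := by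
    intro x y h
    rw [sup_adj]
    exact Or.inl h
  have huvp : (G ⊔ fromEdgeSet {s(u,v)}).Adj u v := by
    rw [sup_adj, fromEdgeSet_adj]
    exact Or.inr ⟨rfl, hne⟩
  have hC : ∀ w' z' : V, w' ≠ z' → G.Adj u w' → G.Adj u z' → G.Adj v w' → G.Adj v z' →
      dAt _ u v w' z' = G' := fun w' z' h1 h2 h3 h4 h5 =>
    huniq _ (isCopy_dAt huvp (hGp h2) (hGp h3) (hGp h4) (hGp h5) h1)
  ext t
  simp only [Finset.mem_inter, mem_neighborFinset, Finset.mem_insert, Finset.mem_singleton]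
  constructor
  · rintro ⟨hut, hvt⟩
    by_contra hc
    push_neg at hc
    obtain ⟨htw, htz⟩ := hc
    have e1 := hC w z hwz huw huz hvw hvz
    have e2 := hC w t (Ne.symm htw) huw hut hvw hvt
    have hvv := congrArg SimpleGraph.Subgraph.verts (e1.trans e2.symm)
    rw [dAt_verts, dAt_verts] at hvv
    have hzmem : z ∈ ({u, v, w, t} : Set V) := by
      rw [← hvv]; simp
    simp only [Set.mem_insert_iff, Set.mem_singleton_iff] at hzmem
    rcases hzmem with h|h|h|h
    · exact huz.ne' h
    · exact hvz.ne' h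
    · exact hwz h.symm
    · exact htz h.symm
  · rintro (rfl|rfl)
    · exact ⟨huw, hvw⟩
    · exact ⟨huz, hvz⟩

lemma adj_inter_empty [Fintype V] [DecidableEq V] [DecidableRel G.Adj]
    {u v : V} (hu : u ∉ triangleVerts G) (huv : G.Adj u v) :
    G.neighborFinset u ∩ G.neighborFinset v = ∅ := by
  ext t
  simp only [Finset.mem_inter, mem_neighborFinset, Finset.notMem_empty, iff_false, not_and]
  intro h1 h2
  exact hu ⟨v, t, huv, h1, h2⟩

lemma sum_inter [Fintype V] [DecidableEq V] [DecidableRel G.Adj] (u v : V) :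
    ∑ x ∈ G.neighborFinset u, (G.neighborFinset x ∩ G.neighborFinset v).card
      = ∑ y ∈ G.neighborFinset v, (G.neighborFinset y ∩ G.neighborFinset u).card := by
  have h : ∀ w x : V, (G.neighborFinset x ∩ G.neighborFinset w).card
      = ∑ y ∈ G.neighborFinset w, if G.Adj x y then 1 else 0 := by
    intro w x
    have he : G.neighborFinset x ∩ G.neighborFinset w
        = (G.neighborFinset w).filter (fun y => G.Adj x y) := by
      ext y
      simp [mem_neighborFinset, and_comm]
    rw [he, Finset.card_filter]
  have h' : ∀ w x : V, (G.neighborFinset x ∩ G.neighborFinset w).card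
      = ∑ y ∈ G.neighborFinset w, if G.Adj y x then 1 else 0 := by
    intro w x
    have he : G.neighborFinset x ∩ G.neighborFinset w
        = (G.neighborFinset w).filter (fun y => G.Adj y x) := by
      ext y
      simp only [Finset.mem_inter, Finset.mem_filter, mem_neighborFinset]
      rw [G.adj_comm x y]
      exact and_comm
    rw [he, Finset.card_filter]
  calc ∑ x ∈ G.neighborFinset u, (G.neighborFinset x ∩ G.neighborFinset v).card
      = ∑ x ∈ G.neighborFinset u, ∑ y ∈ G.neighborFinset v, if G.Adj x y then 1 else 0 :=
        Finset.sum_congr rfl fun x _ => h v x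
    _ = ∑ y ∈ G.neighborFinset v, ∑ x ∈ G.neighborFinset u, if G.Adj x y then 1 else 0 :=
        Finset.sum_comm
    _ = ∑ y ∈ G.neighborFinset v, (G.neighborFinset y ∩ G.neighborFinset u).card :=
        Finset.sum_congr rfl fun y _ => (h' u y).symm

lemma deg_eq [Fintype V] [DecidableEq V] [DecidableRel G.Adj]
    (hsat : UniquelySaturated diamond G)
    {u0 : V} (hu0A : u0 ∉ triangleVerts G) (hu0nbr : ∀ a ∈ triangleVerts G, ¬ G.Adj u0 a)
    {v : V} (hv : v ∉ triangleVerts G) (hne : v ≠ u0) :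
    (G.neighborFinset v).card = (G.neighborFinset u0).card := by
  have hnbrB : ∀ x : V, G.Adj u0 x → x ∉ triangleVerts G :=
    fun x hx hxA => hu0nbr x hxA hx
  have hmain := sum_inter (G := G) u0 v
  by_cases hadj : G.Adj u0 v
  · have hvmem : v ∈ G.neighborFinset u0 := (mem_neighborFinset _ _ _).mpr hadj
    have hu0mem : u0 ∈ G.neighborFinset v := (mem_neighborFinset _ _ _).mpr hadj.symm
    have S1 : ∑ x ∈ G.neighborFinset u0, (G.neighborFinset x ∩ G.neighborFinset v).card
        = (G.neighborFinset v).card + ((G.neighborFinset u0).card - 1) * 2 := by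
      have hconst : ∀ x ∈ (G.neighborFinset u0).erase v,
          (G.neighborFinset x ∩ G.neighborFinset v).card = 2 := by
        intro x hx
        obtain ⟨hxne, hxmem⟩ := Finset.mem_erase.mp hx
        have hxadj : G.Adj u0 x := (mem_neighborFinset _ _ _).mp hxmem
        have hxB : x ∉ triangleVerts G := hnbrB x hxadj
        have hxv : ¬ G.Adj x v := fun h => hu0A ⟨x, v, hxadj, hadj, h⟩
        obtain ⟨w, z, hwz, hpair⟩ := common_eq_pair hsat hxB (Or.inl hv) hxne hxv
        rw [hpair, Finset.card_pair hwz]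
      rw [← Finset.add_sum_erase _ _ hvmem, Finset.inter_self,
        Finset.sum_congr rfl hconst, Finset.sum_const, smul_eq_mul,
        Finset.card_erase_of_mem hvmem]
    have S2 : ∑ y ∈ G.neighborFinset v, (G.neighborFinset y ∩ G.neighborFinset u0).card
        = (G.neighborFinset u0).card + ((G.neighborFinset v).card - 1) * 2 := by
      have hconst : ∀ y ∈ (G.neighborFinset v).erase u0,
          (G.neighborFinset y ∩ G.neighborFinset u0).card = 2 := by
        intro y hy
        obtain ⟨hyne, hymem⟩ := Finset.mem_erase.mp hy
        have hyadj : G.Adj v y := (mem_neighborFinset _ _ _).mp hymem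
        have hyu0 : ¬ G.Adj u0 y := fun h => hu0A ⟨y, v, h, hadj, hyadj.symm⟩
        obtain ⟨w, z, hwz, hpair⟩ := common_eq_pair hsat hu0A (Or.inr hu0nbr)
          (Ne.symm hyne) hyu0
        rw [Finset.inter_comm, hpair, Finset.card_pair hwz]
      rw [← Finset.add_sum_erase _ _ hu0mem, Finset.inter_self,
        Finset.sum_congr rfl hconst, Finset.sum_const, smul_eq_mul,
        Finset.card_erase_of_mem hu0mem]
    have h1 : 1 ≤ (G.neighborFinset u0).card := Finset.card_pos.mpr ⟨v, hvmem⟩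
    have h2 : 1 ≤ (G.neighborFinset v).card := Finset.card_pos.mpr ⟨u0, hu0mem⟩
    rw [S1, S2] at hmain
    omega
  · obtain ⟨p, q, hpq, hinter⟩ := common_eq_pair hsat hu0A (Or.inr hu0nbr) (Ne.symm hne) hadj
    have hp : p ∈ G.neighborFinset u0 ∩ G.neighborFinset v := by rw [hinter]; simp
    have hq : q ∈ G.neighborFinset u0 ∩ G.neighborFinset v := by rw [hinter]; simp
    obtain ⟨hp1, hp2⟩ := Finset.mem_inter.mp hp
    obtain ⟨hq1, hq2⟩ := Finset.mem_inter.mp hq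
    have hu0p : G.Adj u0 p := (mem_neighborFinset _ _ _).mp hp1
    have hu0q : G.Adj u0 q := (mem_neighborFinset _ _ _).mp hq1
    have hvp : G.Adj v p := (mem_neighborFinset _ _ _).mp hp2
    have hvq : G.Adj v q := (mem_neighborFinset _ _ _).mp hq2
    have hsub1 : ({p, q} : Finset V) ⊆ G.neighborFinset u0 := by
      intro t ht
      rcases Finset.mem_insert.mp ht with rfl | ht
      · exact hp1
      · rw [Finset.mem_singleton] at ht; subst ht; exact hq1
    have hsub2 : ({p, q} : Finset V) ⊆ G.neighborFinset v := by
      intro t ht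
      rcases Finset.mem_insert.mp ht with rfl | ht
      · exact hp2
      · rw [Finset.mem_singleton] at ht; subst ht; exact hq2
    have S1 : ∑ x ∈ G.neighborFinset u0, (G.neighborFinset x ∩ G.neighborFinset v).card
        = ((G.neighborFinset u0).card - 2) * 2 := by
      rw [← Finset.sum_sdiff hsub1]
      have hz : ∑ x ∈ ({p, q} : Finset V), (G.neighborFinset x ∩ G.neighborFinset v).card
          = 0 := by
        rw [Finset.sum_pair hpq, adj_inter_empty (hnbrB p hu0p) hvp.symm,
          adj_inter_empty (hnbrB q hu0q) hvq.symm]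
        simp
      have hconst : ∀ x ∈ G.neighborFinset u0 \ {p, q},
          (G.neighborFinset x ∩ G.neighborFinset v).card = 2 := by
        intro x hx
        obtain ⟨hxmem, hxpq⟩ := Finset.mem_sdiff.mp hx
        have hxadj : G.Adj u0 x := (mem_neighborFinset _ _ _).mp hxmem
        have hxB : x ∉ triangleVerts G := hnbrB x hxadj
        have hxv : x ≠ v := fun h => hadj (h ▸ hxadj)
        have hxnadj : ¬ G.Adj x v := by
          intro h
          apply hxpq
          rw [← hinter]
          exact Finset.mem_inter.mpr ⟨hxmem, (mem_neighborFinset _ _ _).mpr h.symm⟩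
        obtain ⟨w, z, hwz, hpair⟩ := common_eq_pair hsat hxB (Or.inl hv) hxv hxnadj
        rw [hpair, Finset.card_pair hwz]
      rw [hz, add_zero, Finset.sum_congr rfl hconst, Finset.sum_const, smul_eq_mul,
        Finset.card_sdiff_of_subset hsub1, Finset.card_pair hpq]
    have S2 : ∑ y ∈ G.neighborFinset v, (G.neighborFinset y ∩ G.neighborFinset u0).card
        = ((G.neighborFinset v).card - 2) * 2 := by
      rw [← Finset.sum_sdiff hsub2]
      have hz : ∑ y ∈ ({p, q} : Finset V), (G.neighborFinset y ∩ G.neighborFinset u0).card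
          = 0 := by
        rw [Finset.sum_pair hpq, adj_inter_empty (hnbrB p hu0p) hu0p.symm,
          adj_inter_empty (hnbrB q hu0q) hu0q.symm]
        simp
      have hconst : ∀ y ∈ G.neighborFinset v \ {p, q},
          (G.neighborFinset y ∩ G.neighborFinset u0).card = 2 := by
        intro y hy
        obtain ⟨hymem, hypq⟩ := Finset.mem_sdiff.mp hy
        have hyadj : G.Adj v y := (mem_neighborFinset _ _ _).mp hymem
        have hyu0 : y ≠ u0 := fun h => hadj (h ▸ hyadj).symm
        have hynadj : ¬ G.Adj u0 y := by
          intro h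
          apply hypq
          rw [← hinter]
          exact Finset.mem_inter.mpr ⟨(mem_neighborFinset _ _ _).mpr h, hymem⟩
        obtain ⟨w, z, hwz, hpair⟩ := common_eq_pair hsat hu0A (Or.inr hu0nbr)
          (Ne.symm hyu0) hynadj
        rw [Finset.inter_comm, hpair, Finset.card_pair hwz]
      rw [hz, add_zero, Finset.sum_congr rfl hconst, Finset.sum_const, smul_eq_mul,
        Finset.card_sdiff_of_subset hsub2, Finset.card_pair hpq]
    have h1 : 2 ≤ (G.neighborFinset u0).card := by
      calc 2 = ({p, q} : Finset V).card := (Finset.card_pair hpq).symm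
        _ ≤ _ := Finset.card_le_card hsub1
    have h2 : 2 ≤ (G.neighborFinset v).card := by
      calc 2 = ({p, q} : Finset V).card := (Finset.card_pair hpq).symm
        _ ≤ _ := Finset.card_le_card hsub2
    rw [S1, S2] at hmain
    omega


end Aux

theorem stmt7 {V : Type*} [Fintype V] (G : SimpleGraph V)
    (hsat : UniquelySaturated diamond G)
    (htri : ∃ a b c : V, G.Adj a b ∧ G.Adj a c ∧ G.Adj b c)
    (hdist2 : ∃ u : V, u ∉ triangleVerts G ∧ (∀ a ∈ triangleVerts G, ¬ G.Adj u a) ∧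
      ∃ a ∈ triangleVerts G, G.dist u a = 2) :
    ∀ u v : V, u ∉ triangleVerts G → v ∉ triangleVerts G →
      (G.neighborSet u).ncard = (G.neighborSet v).ncard := by
  classical
  obtain ⟨u0, hu0A, hu0nbr, -⟩ := hdist2
  intro u v hu hv
  have hdeg : ∀ x : V, (G.neighborSet x).ncard = (G.neighborFinset x).card := by
    intro x
    rw [neighborFinset_def]
    exact Set.ncard_eq_toFinset_card' _
  have key : ∀ x : V, x ∉ triangleVerts G →
      (G.neighborFinset x).card = (G.neighborFinset u0).card := by
    intro x hx
    rcases eq_or_ne x u0 with h | h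
    · rw [h]
    · exact deg_eq hsat hu0A hu0nbr hx h
  rw [hdeg, hdeg, key u hu, key v hv]
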